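/- Let r : 𝔤* → 𝔤 be a skew-symmetric solution of the classical Yang–Baxter equation. Then the image Im(r) is a Lie subalgebra of 𝔤, and for every α ∈ 𝔤* the trace of the right multiplication R_α : 𝔤* → 𝔤*, R_α(β) := ad*_{r(β)}α, equals the trace of the linear endomorphism S_α of Im(r) determined by S_α(r(β)) := r(ad*_{r(β)}α) for all β ∈ 𝔤*. -/

import Mathlib

/-- The coadjoint action of `x : L` on the dual: `⟨coad x α, y⟩ = -⟨α, [x,y]⟩`. -/
noncomputable def coad {L : Type*} [LieRing L] [LieAlgebra ℝ L]
    (x : L) (α : Module.Dual ℝ L) : Module.Dual ℝ L :=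
  -(α ∘ₗ (LieAlgebra.ad ℝ L x))

/-- `[r,r](α,β,γ) := ⟨γ,[r α, r β]⟩ + ⟨α,[r β, r γ]⟩ + ⟨β,[r γ, r α]⟩`. -/
def cybe {L : Type*} [LieRing L] [LieAlgebra ℝ L]
    (r : Module.Dual ℝ L →ₗ[ℝ] L) (α β γ : Module.Dual ℝ L) : ℝ :=
  γ ⁅r α, r β⁆ + α ⁅r β, r γ⁆ + β ⁅r γ, r α⁆

lemma coad_apply {L : Type*} [LieRing L] [LieAlgebra ℝ L]
    (x : L) (α : Module.Dual ℝ L) (y : L) : coad x α y = -(α ⁅x, y⁆) := rfl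

/-- for a skew-symmetric solution `r` of the CYBE, `Im r` is a Lie
subalgebra of `𝔤`, and for every `α ∈ 𝔤*` the trace of the right multiplication
`R_α : β ↦ ad*_{r β} α` on `𝔤*` equals the trace of the endomorphism `S_α` of `Im r`
determined by `S_α (r β) = r (ad*_{r β} α)`. -/
theorem stmt4 {L : Type*} [LieRing L] [LieAlgebra ℝ L] [FiniteDimensional ℝ L]
    (r : Module.Dual ℝ L →ₗ[ℝ] L)
    (hskew : ∀ α β : Module.Dual ℝ L, α (r β) = - β (r α))
    (hcybe : ∀ α β γ : Module.Dual ℝ L, cybe r α β γ = 0) :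
    (∀ x ∈ LinearMap.range r, ∀ y ∈ LinearMap.range r, ⁅x, y⁆ ∈ LinearMap.range r) ∧
    (∀ (α : Module.Dual ℝ L)
      (R : Module.Dual ℝ L →ₗ[ℝ] Module.Dual ℝ L)
      (S : LinearMap.range r →ₗ[ℝ] LinearMap.range r),
      (∀ β : Module.Dual ℝ L, R β = coad (r β) α) →
      (∀ β : Module.Dual ℝ L,
        (S ⟨r β, LinearMap.mem_range_self r β⟩ : L) = r (coad (r β) α)) →
      LinearMap.trace ℝ (Module.Dual ℝ L) R = LinearMap.trace ℝ (LinearMap.range r) S) := by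
  constructor
  · rintro x ⟨a, rfl⟩ y ⟨b, rfl⟩
    refine ⟨coad (r a) b - coad (r b) a, ?_⟩
    rw [← sub_eq_zero, map_sub, ← (Module.forall_dual_apply_eq_zero_iff ℝ _)]
    intro γ
    have h1 : γ (r (coad (r a) b)) = b ⁅r a, r γ⁆ := by
      rw [hskew γ (coad (r a) b), coad_apply]; ring
    have h2 : γ (r (coad (r b) a)) = a ⁅r b, r γ⁆ := by
      rw [hskew γ (coad (r b) a), coad_apply]; ring
    have hc := hcybe a b γ
    unfold cybe at hc
    have hba : (b : Module.Dual ℝ L) ⁅r γ, r a⁆ = - b ⁅r a, r γ⁆ := by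
      rw [← lie_skew (r a) (r γ), map_neg, neg_neg]
    simp only [map_sub, h1, h2]
    rw [hba] at hc
    linarith
  · intro α R S hR hS
    -- the range-restricted map
    set rr := r.rangeRestrict with hrr
    have hsurj : LinearMap.range rr = ⊤ := LinearMap.range_rangeRestrict r
    obtain ⟨q, hq⟩ := rr.exists_rightInverse_of_surjective hsurj
    -- R vanishes on ker r
    have hker : ∀ β, r β = 0 → R β = 0 := by
      intro β hβ
      rw [hR β, hβ]
      ext y
      simp [coad]
    -- R = (R ∘ q) ∘ rr
    have hfact : R = (R ∘ₗ q) ∘ₗ rr := by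
      refine LinearMap.ext fun β => ?_
      have h0 : r (β - q (rr β)) = 0 := by
        have : rr (β - q (rr β)) = 0 := by
          rw [map_sub]
          have := LinearMap.congr_fun hq (rr β)
          simp only [LinearMap.comp_apply, LinearMap.id_apply] at this
          rw [this, sub_self]
        have := congrArg (Subtype.val) this
        exact this
      have := hker _ h0
      rw [map_sub] at this
      have : R β = R (q (rr β)) := by
        have h' := sub_eq_zero.mp this
        exact h'
      simpa [LinearMap.comp_apply] using this
    -- intertwining: rr ∘ R = S ∘ rr
    have hint : rr ∘ₗ R = S ∘ₗ rr := by
      refine LinearMap.ext fun β => Subtype.ext ?_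
      show r (R β) = ((S ⟨r β, LinearMap.mem_range_self r β⟩ : LinearMap.range r) : L)
      rw [hS β, hR β]
    calc LinearMap.trace ℝ (Module.Dual ℝ L) R
        = LinearMap.trace ℝ (Module.Dual ℝ L) ((R ∘ₗ q) ∘ₗ rr) := by rw [← hfact]
      _ = LinearMap.trace ℝ (LinearMap.range r) (rr ∘ₗ (R ∘ₗ q)) :=
          LinearMap.trace_comp_comm' rr (R ∘ₗ q)
      _ = LinearMap.trace ℝ (LinearMap.range r) S := by
          rw [← LinearMap.comp_assoc, hint, LinearMap.comp_assoc, hq, LinearMap.comp_id]
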